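/- Let ξ > 0, c > 0, and let α : [1,∞) → ℝ be measurable, integrable on compact subintervals, with α(t) → 0 as t → ∞. Define Q(u) = (1−u)^{−ξ} · c · exp(∫_1^{1/(1−u)} α(t)/t dt) for u ∈ (0,1). Then as τ → 1 from the left: (1−τ)^{−1} · ∫_τ^1 log(Q(u)/Q(τ)) du → ξ and (1−τ)^{−1} · ∫_τ^1 (log(Q(u)/Q(τ)))² du → 2ξ². -/

import Mathlib

open MeasureTheory Real Filter

open Set

section HillAux


lemma improper_ftc_zero (f H : ℝ → ℝ) (s L : ℝ) (hs : 0 < s)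
    (hderiv : ∀ v ∈ Set.Ioi (0:ℝ), HasDerivAt H (f v) v)
    (hfc : ContinuousOn f (Set.Ioi 0))
    (hf0 : ∀ v ∈ Set.Ioo (0:ℝ) s, 0 ≤ f v)
    (htend : Tendsto H (nhdsWithin 0 (Set.Ioi 0)) (nhds L)) :
    IntegrableOn f (Set.Ioo 0 s) ∧ ∫ v in Set.Ioo 0 s, f v = H s - L := by
  set μ : Measure ℝ := volume.restrict (Set.Ioo 0 s) with hμ
  set a : ℕ → ℝ := fun n => s / (n + 2) with ha
  have hapos : ∀ n, 0 < a n := fun n => div_pos hs (by positivity)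
  have halt : ∀ n : ℕ, a n < s := by
    intro n
    rw [ha]
    rw [div_lt_iff₀ (by positivity)]
    nlinarith [hs]
  have hatend : Tendsto a atTop (nhds 0) := by
    rw [ha]
    simpa using tendsto_const_nhds.div_atTop
      (tendsto_atTop_add_const_right atTop (2:ℝ) tendsto_natCast_atTop_atTop)
  have hcover : AECover μ atTop (fun n => Set.Ioo (a n) s) :=
    aecover_Ioo_of_Ioo hatend tendsto_const_nhds
  have hsub : ∀ n, Set.Ioo (a n) s ⊆ Set.Ioo 0 s := fun n =>
    Set.Ioo_subset_Ioo (hapos n).le le_rfl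
  have hs_sub : ∀ n, Set.uIcc (a n) s ⊆ Set.Ioi (0:ℝ) := by
    intro n
    rw [Set.uIcc_of_le (halt n).le]
    intro x hx
    exact lt_of_lt_of_le (hapos n) hx.1
  have hii : ∀ n, IntervalIntegrable f volume (a n) s := fun n =>
    (hfc.mono (hs_sub n)).intervalIntegrable
  have hval : ∀ n, ∫ v in (a n)..s, f v = H s - H (a n) := by
    intro n
    exact intervalIntegral.integral_eq_sub_of_hasDerivAt
      (fun x hx => hderiv x (hs_sub n hx)) (hii n)
  have hint_n : ∀ n, IntegrableOn f (Set.Ioo (a n) s) μ := by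
    intro n
    have : IntegrableOn f (Set.Ioo (a n) s) volume :=
      (intervalIntegrable_iff_integrableOn_Ioo_of_le (halt n).le).1 (hii n)
    rw [IntegrableOn, hμ, Measure.restrict_restrict measurableSet_Ioo,
      Set.inter_eq_self_of_subset_left (hsub n)]
    exact this
  have hieq : ∀ n, ∫ v in Set.Ioo (a n) s, f v ∂μ = H s - H (a n) := by
    intro n
    rw [hμ, Measure.restrict_restrict measurableSet_Ioo,
      Set.inter_eq_self_of_subset_left (hsub n)]
    rw [← hval n, intervalIntegral.integral_of_le (halt n).le,
      MeasureTheory.integral_Ioc_eq_integral_Ioo]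
  have hHtend : Tendsto (fun n => ∫ v in Set.Ioo (a n) s, f v ∂μ) atTop
      (nhds (H s - L)) := by
    simp only [hieq]
    exact tendsto_const_nhds.sub (htend.comp
      (tendsto_nhdsWithin_iff.2 ⟨hatend, Eventually.of_forall fun n => hapos n⟩))
  have hnng : ∀ᵐ x ∂μ, 0 ≤ f x := by
    rw [hμ, ae_restrict_iff' measurableSet_Ioo]
    exact Eventually.of_forall hf0
  have hint : Integrable f μ :=
    hcover.integrable_of_integral_tendsto_of_nonneg_ae (H s - L) hint_n hnng hHtend
  refine ⟨hint, hcover.integral_eq_of_tendsto _ hint hHtend⟩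


lemma tendsto_id_zero : Tendsto (fun v : ℝ => v) (nhdsWithin 0 (Set.Ioi 0)) (nhds 0) :=
  (continuous_id.tendsto 0).mono_left nhdsWithin_le_nhds

lemma tendsto_log_mul_self :
    Tendsto (fun v : ℝ => Real.log v * v) (nhdsWithin 0 (Set.Ioi 0)) (nhds 0) := by
  have h := tendsto_log_mul_rpow_nhdsGT_zero one_pos
  refine h.congr' ?_
  filter_upwards [self_mem_nhdsWithin] with v hv
  rw [Real.rpow_one]

lemma tendsto_log_sq_mul_self :
    Tendsto (fun v : ℝ => Real.log v ^ 2 * v) (nhdsWithin 0 (Set.Ioi 0)) (nhds 0) := by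
  have h := tendsto_log_mul_rpow_nhdsGT_zero (by norm_num : (0:ℝ) < 1/2)
  have h2 := h.mul h
  rw [mul_zero] at h2
  refine h2.congr' ?_
  filter_upwards [self_mem_nhdsWithin] with v hv
  have : v ^ (1/2 : ℝ) * v ^ (1/2 : ℝ) = v := by
    rw [← Real.rpow_add hv]
    norm_num
  calc Real.log v * v ^ (1/2:ℝ) * (Real.log v * v ^ (1/2:ℝ))
      = Real.log v ^ 2 * (v ^ (1/2:ℝ) * v ^ (1/2:ℝ)) := by ring
    _ = Real.log v ^ 2 * v := by rw [this]

lemma contOn_log_sub (s : ℝ) :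
    ContinuousOn (fun v => Real.log s - Real.log v) (Set.Ioi (0:ℝ)) :=
  continuousOn_const.sub (Real.continuousOn_log.mono fun x hx => ne_of_gt hx)

lemma log_int_one (s : ℝ) (hs : 0 < s) :
    IntegrableOn (fun v => Real.log s - Real.log v) (Set.Ioo 0 s) ∧
      ∫ v in Set.Ioo 0 s, (Real.log s - Real.log v) = s := by
  have key := improper_ftc_zero (fun v => Real.log s - Real.log v)
      (fun v => v * (Real.log s - Real.log v + 1)) s 0 hs
      (fun v hv => by
        have hne : (v:ℝ) ≠ 0 := ne_of_gt hv
        have W : HasDerivAt (fun v : ℝ => Real.log s - Real.log v + 1)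
            (0 - v⁻¹) v := ((hasDerivAt_const v (Real.log s)).sub
              (Real.hasDerivAt_log hne)).add_const 1
        have := (hasDerivAt_id v).mul W
        refine this.congr_deriv ?_
        have hvv : id v * v⁻¹ = 1 := mul_inv_cancel₀ hne
        linear_combination -hvv)
      (contOn_log_sub s)
      (fun v hv => sub_nonneg.2 (Real.log_le_log hv.1 hv.2.le))
      (by
        have : Tendsto (fun v : ℝ => v * Real.log s + v - Real.log v * v)
            (nhdsWithin 0 (Set.Ioi 0)) (nhds (0 * Real.log s + 0 - 0)) :=
          ((tendsto_id_zero.mul_const _).add tendsto_id_zero).sub tendsto_log_mul_self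
        simp only [zero_mul, zero_add, sub_zero, add_zero] at this
        refine this.congr fun v => by ring)
  refine ⟨key.1, ?_⟩
  rw [key.2]
  simp

lemma log_int_two (s : ℝ) (hs : 0 < s) :
    IntegrableOn (fun v => (Real.log s - Real.log v) ^ 2) (Set.Ioo 0 s) ∧
      ∫ v in Set.Ioo 0 s, (Real.log s - Real.log v) ^ 2 = 2 * s := by
  have key := improper_ftc_zero (fun v => (Real.log s - Real.log v) ^ 2)
      (fun v => v * ((Real.log s - Real.log v) ^ 2 + 2 * (Real.log s - Real.log v) + 2)) s 0 hs
      (fun v hv => by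
        have hne : (v:ℝ) ≠ 0 := ne_of_gt hv
        have W : HasDerivAt (fun v : ℝ => Real.log s - Real.log v)
            (0 - v⁻¹) v := (hasDerivAt_const v (Real.log s)).sub (Real.hasDerivAt_log hne)
        have W2 := W.pow 2
        have W3 := ((W2.add (W.const_mul 2)).add_const 2)
        have := (hasDerivAt_id v).mul W3
        refine this.congr_deriv ?_
        have hvv : id v * v⁻¹ = 1 := mul_inv_cancel₀ hne
        simp only [Pi.add_apply, Pi.pow_apply]
        linear_combination (-(2 * (Real.log s - Real.log v) + 2)) * hvv)
      ((contOn_log_sub s).pow 2)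
      (fun v hv => sq_nonneg _)
      (by
        have : Tendsto (fun v : ℝ =>
            v * Real.log s ^ 2 - 2 * Real.log s * (Real.log v * v) + Real.log v ^ 2 * v
              + 2 * (v * Real.log s) - 2 * (Real.log v * v) + 2 * v)
            (nhdsWithin 0 (Set.Ioi 0))
            (nhds (0 * Real.log s ^ 2 - 2 * Real.log s * 0 + 0 + 2 * (0 * Real.log s) - 2 * 0 + 2 * 0)) := by
          exact (((((tendsto_id_zero.mul_const _).sub
            (tendsto_log_mul_self.const_mul _)).add tendsto_log_sq_mul_self).add
            ((tendsto_id_zero.mul_const _).const_mul 2)).sub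
            (tendsto_log_mul_self.const_mul 2)).add (tendsto_id_zero.const_mul 2)
        simp only [zero_mul, mul_zero, sub_zero, add_zero, zero_add] at this
        refine this.congr fun v => by ring)
  refine ⟨key.1, ?_⟩
  rw [key.2]
  simp
  ring


section helpers

lemma g_ii (α : ℝ → ℝ) (hint : ∀ a b : ℝ, 1 ≤ a → IntervalIntegrable α volume a b) {p q : ℝ} (hp : 1 ≤ p) (hq : 1 ≤ q) :
    IntervalIntegrable (fun t => α t / t) volume p q := by
  have h := hint p q hp
  have hc : ContinuousOn (fun t : ℝ => t⁻¹) (Set.uIcc p q) := by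
    apply continuousOn_id.inv₀
    intro x hx
    have : (1:ℝ) ≤ x := le_trans (le_min hp hq) (by
      rw [Set.uIcc] at hx; exact hx.1)
    exact ne_of_gt (lt_of_lt_of_le one_pos this)
  simpa [div_eq_mul_inv] using h.mul_continuousOn hc

lemma F_contOn (α : ℝ → ℝ) (hint : ∀ a b : ℝ, 1 ≤ a → IntervalIntegrable α volume a b) :
    ContinuousOn (fun x => ∫ t in (1:ℝ)..x, α t / t) (Set.Ici 1) := by
  intro x hx
  have hx1 : (1:ℝ) ≤ x := hx
  have hInt : IntegrableOn (fun t => α t / t) (Set.uIcc 1 (x+1)) volume := by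
    rw [Set.uIcc_of_le (by linarith)]
    exact (intervalIntegrable_iff_integrableOn_Icc_of_le (by linarith)).1
      (g_ii α hint le_rfl (by linarith))
  have hcont := intervalIntegral.continuousOn_primitive_interval hInt
  have hmem : x ∈ Set.uIcc 1 (x+1) := by
    rw [Set.uIcc_of_le (by linarith)]
    exact ⟨hx1, by linarith⟩
  refine (hcont x hmem).mono_of_mem_nhdsWithin ?_
  rw [mem_nhdsWithin_iff_exists_mem_nhds_inter]
  refine ⟨Set.Iio (x+1), Iio_mem_nhds (by linarith), ?_⟩
  rintro y ⟨hy1, hy2⟩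
  rw [Set.uIcc_of_le (by linarith)]
  exact ⟨hy2, le_of_lt hy1⟩

end helpers

theorem key_bounds (ξ c : ℝ) (hξ : 0 < ξ) (hc : 0 < c)
    (α : ℝ → ℝ) (hmeas : Measurable α)
    (hint : ∀ a b : ℝ, 1 ≤ a → IntervalIntegrable α volume a b)
    (Q : ℝ → ℝ)
    (hQ : ∀ u ∈ Set.Ioo (0:ℝ) 1,
      Q u = (1 - u) ^ (-ξ) * c *
        Real.exp (∫ t in (1:ℝ)..(1 / (1 - u)), α t / t))
    (ε T τ : ℝ) (hε : 0 < ε) (hεξ : ε ≤ ξ) (hT : 1 ≤ T)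
    (hαT : ∀ t, T ≤ t → |α t| ≤ ε)
    (hτ : τ ∈ Set.Ioo (0:ℝ) 1) (hτT : T ≤ 1/(1-τ)) :
    |(1-τ)⁻¹ * (∫ u in τ..1, Real.log (Q u / Q τ)) - ξ| ≤ ε ∧
    2*(ξ-ε)^2 ≤ (1-τ)⁻¹ * ∫ u in τ..1, (Real.log (Q u / Q τ))^2 ∧
    (1-τ)⁻¹ * (∫ u in τ..1, (Real.log (Q u / Q τ))^2) ≤ 2*(ξ+ε)^2 := by
  obtain ⟨hτ0, hτ1⟩ := hτ
  set s : ℝ := 1 - τ with hs_def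
  have hs : 0 < s := by simp [hs_def]; linarith
  have hs1 : s < 1 := by rw [hs_def]; linarith
  set F : ℝ → ℝ := fun x => ∫ t in (1:ℝ)..x, α t / t with hF_def
  set L : ℝ → ℝ := fun u => Real.log s - Real.log (1-u) with hL_def
  set X : ℝ → ℝ := fun u => Real.log (Q u / Q τ) with hX_def
  -- basic facts about points of Ioo τ 1
  have hu_basic : ∀ u ∈ Set.Ioo τ 1, 0 < 1 - u ∧ 1 - u < s ∧ u ∈ Set.Ioo (0:ℝ) 1 := by
    rintro u ⟨h1, h2⟩
    exact ⟨by linarith, by rw [hs_def]; linarith, ⟨by linarith, h2⟩⟩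
  have hQpos : ∀ u ∈ Set.Ioo (0:ℝ) 1, 0 < Q u := by
    intro u hu
    rw [hQ u hu]
    have : 0 < 1 - u := by linarith [hu.2]
    positivity
  have hlogQ : ∀ u ∈ Set.Ioo (0:ℝ) 1,
      Real.log (Q u) = -ξ * Real.log (1-u) + Real.log c + F (1/(1-u)) := by
    intro u hu
    have h1u : 0 < 1 - u := by linarith [hu.2]
    rw [hQ u hu, Real.log_mul (by positivity) (Real.exp_ne_zero _),
      Real.log_mul (by positivity) (ne_of_gt hc), Real.log_exp,
      Real.log_rpow h1u]
  have hone_le : ∀ u ∈ Set.Ioo τ 1, (1:ℝ) ≤ 1/(1-u) := by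
    intro u hu
    obtain ⟨h1u, h2u, _⟩ := hu_basic u hu
    rw [le_div_iff₀ h1u]
    linarith
  have hone_le_s : (1:ℝ) ≤ 1/s := by
    rw [le_div_iff₀ hs]; linarith
  have hτIoo : τ ∈ Set.Ioo (0:ℝ) 1 := ⟨hτ0, hτ1⟩
  -- X = ξ L + E with E an interval integral
  have hXeq : ∀ u ∈ Set.Ioo τ 1,
      X u = ξ * L u + ∫ t in (1/s)..(1/(1-u)), α t / t := by
    intro u hu
    obtain ⟨h1u, h2u, huI⟩ := hu_basic u hu
    have hE : F (1/s) + (∫ t in (1/s)..(1/(1-u)), α t / t) = F (1/(1-u)) := by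
      exact intervalIntegral.integral_add_adjacent_intervals
        (g_ii α hint le_rfl hone_le_s) (g_ii α hint hone_le_s (hone_le u hu))
    have : X u = Real.log (Q u) - Real.log (Q τ) := by
      rw [hX_def]
      exact Real.log_div (ne_of_gt (hQpos u huI)) (ne_of_gt (hQpos τ hτIoo))
    rw [this, hlogQ u huI, hlogQ τ hτIoo, hL_def]
    have hsτ : (1:ℝ) - τ = s := rfl
    rw [hsτ, ← hE]
    ring
  -- bound on E
  have hLnn : ∀ u ∈ Set.Ioo τ 1, 0 ≤ L u := by
    intro u hu
    obtain ⟨h1u, h2u, _⟩ := hu_basic u hu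
    exact sub_nonneg.2 (Real.log_le_log h1u h2u.le)
  have hEbd : ∀ u ∈ Set.Ioo τ 1,
      |∫ t in (1/s)..(1/(1-u)), α t / t| ≤ ε * L u := by
    intro u hu
    obtain ⟨h1u, h2u, _⟩ := hu_basic u hu
    set p : ℝ := 1/s
    set q : ℝ := 1/(1-u)
    have hppos : 0 < p := by positivity
    have hq1 : (1:ℝ) ≤ q := hone_le u hu
    have hpq : p ≤ q := by
      rw [div_le_div_iff₀ hs h1u]
      linarith
    have h1 : |∫ t in p..q, α t / t| ≤ ∫ t in p..q, |α t / t| :=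
      intervalIntegral.abs_integral_le_integral_abs hpq
    have h2 : (∫ t in p..q, |α t / t|) ≤ ∫ t in p..q, ε / t := by
      apply intervalIntegral.integral_mono_on hpq
      · exact (g_ii α hint hone_le_s hq1).abs
      · apply ContinuousOn.intervalIntegrable
        apply continuousOn_const.div continuousOn_id
        intro x hx
        rw [Set.uIcc_of_le hpq] at hx
        exact ne_of_gt (lt_of_lt_of_le hppos hx.1)
      · intro t ht
        have htp : p ≤ t := ht.1
        have htpos : 0 < t := lt_of_lt_of_le hppos htp
        rw [abs_div, abs_of_pos htpos]
        have htT : T ≤ t := le_trans hτT htp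
        have hαt : |α t| ≤ ε := hαT t htT
        gcongr
    have h3 : (∫ t in p..q, ε / t) = ε * (Real.log q - Real.log p) := by
      have : ∀ t : ℝ, ε / t = ε * (1 / t) := fun t => by ring
      simp_rw [this]
      have h0 : (0:ℝ) ∉ Set.uIcc p q := by
        intro hmem
        rw [Set.uIcc_of_le hpq] at hmem
        exact absurd hmem.1 (not_le.2 hppos)
      rw [intervalIntegral.integral_const_mul, integral_one_div h0]
      rw [Real.log_div (by positivity) (ne_of_gt hppos)]
    have h4 : Real.log q - Real.log p = L u := by
      show Real.log (1/(1-u)) - Real.log (1/s) = _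
      rw [one_div, one_div, Real.log_inv, Real.log_inv, hL_def]
      ring
    calc |∫ t in p..q, α t / t| ≤ ∫ t in p..q, |α t / t| := h1
      _ ≤ ∫ t in p..q, ε / t := h2
      _ = ε * (Real.log q - Real.log p) := h3
      _ = ε * L u := by rw [h4]
  have hFdiff : ∀ u ∈ Set.Ioo τ 1,
      F (1/(1-u)) - F (1/s) = ∫ t in (1/s)..(1/(1-u)), α t / t := by
    intro u hu
    have hE : F (1/s) + (∫ t in (1/s)..(1/(1-u)), α t / t) = F (1/(1-u)) :=
      intervalIntegral.integral_add_adjacent_intervals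
        (g_ii α hint le_rfl hone_le_s) (g_ii α hint hone_le_s (hone_le u hu))
    linarith
  have hXbd : ∀ u ∈ Set.Ioo τ 1, |X u - ξ * L u| ≤ ε * L u := by
    intro u hu
    rw [hXeq u hu]
    simpa using hEbd u hu
  have hτle1 : τ ≤ (1:ℝ) := hτ1.le
  have h1 := log_int_one s hs
  have h2 := log_int_two s hs
  have hτs : 1 - s = τ := by rw [hs_def]; ring
  -- transfer of ∫ L
  have hLii : IntervalIntegrable L volume τ 1 := by
    have h := (intervalIntegrable_iff_integrableOn_Ioo_of_le hs.le).2 h1.1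
    have h' := h.comp_sub_left 1
    rw [sub_zero, hτs] at h'
    exact h'.symm
  have hLint : IntegrableOn L (Set.Ioo τ 1) volume :=
    (intervalIntegrable_iff_integrableOn_Ioo_of_le hτle1).1 hLii
  have hLval : ∫ u in Set.Ioo τ 1, L u = s := by
    have hcv := intervalIntegral.integral_comp_sub_left
      (a := τ) (b := 1) (fun v => Real.log s - Real.log v) 1
    rw [sub_self] at hcv
    have hs' : (1:ℝ) - τ = s := by rw [hs_def]
    rw [hs'] at hcv
    rw [← MeasureTheory.integral_Ioc_eq_integral_Ioo,
      ← intervalIntegral.integral_of_le hτle1]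
    calc ∫ u in τ..1, L u = ∫ x in (0:ℝ)..s, (Real.log s - Real.log x) := hcv
      _ = ∫ v in Set.Ioo 0 s, (Real.log s - Real.log v) := by
          rw [intervalIntegral.integral_of_le hs.le,
            MeasureTheory.integral_Ioc_eq_integral_Ioo]
      _ = s := h1.2
  -- transfer of ∫ L^2
  have hL2ii : IntervalIntegrable (fun u => L u ^ 2) volume τ 1 := by
    have h := (intervalIntegrable_iff_integrableOn_Ioo_of_le hs.le).2 h2.1
    have h' := h.comp_sub_left 1
    rw [sub_zero, hτs] at h'
    exact h'.symm
  have hL2int : IntegrableOn (fun u => L u ^ 2) (Set.Ioo τ 1) volume :=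
    (intervalIntegrable_iff_integrableOn_Ioo_of_le hτle1).1 hL2ii
  have hL2val : ∫ u in Set.Ioo τ 1, L u ^ 2 = 2 * s := by
    have hcv := intervalIntegral.integral_comp_sub_left
      (a := τ) (b := 1) (fun v => (Real.log s - Real.log v) ^ 2) 1
    rw [sub_self] at hcv
    have hs' : (1:ℝ) - τ = s := by rw [hs_def]
    rw [hs'] at hcv
    rw [← MeasureTheory.integral_Ioc_eq_integral_Ioo,
      ← intervalIntegral.integral_of_le hτle1]
    calc ∫ u in τ..1, L u ^ 2 = ∫ x in (0:ℝ)..s, (Real.log s - Real.log x) ^ 2 := hcv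
      _ = ∫ v in Set.Ioo 0 s, (Real.log s - Real.log v) ^ 2 := by
          rw [intervalIntegral.integral_of_le hs.le,
            MeasureTheory.integral_Ioc_eq_integral_Ioo]
      _ = 2 * s := h2.2
  -- measurability of X on the interval
  set φ : ℝ → ℝ := fun u => ξ * L u + (F (1/(1-u)) - F (1/s)) with hφ_def
  have hφcont : ContinuousOn φ (Set.Ioo τ 1) := by
    have hLcont : ContinuousOn L (Set.Ioo τ 1) := by
      apply continuousOn_const.sub
      apply ContinuousOn.log ((continuous_const.sub continuous_id).continuousOn)
      intro x hx
      exact ne_of_gt (hu_basic x hx).1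
    have hinner : ContinuousOn (fun u : ℝ => 1/(1-u)) (Set.Ioo τ 1) := by
      apply continuousOn_const.div ((continuous_const.sub continuous_id).continuousOn)
      intro x hx
      exact ne_of_gt (hu_basic x hx).1
    have hFc : ContinuousOn (fun u => F (1/(1-u))) (Set.Ioo τ 1) :=
      (F_contOn α hint).comp hinner (fun x hx => hone_le x hx)
    exact (continuousOn_const.mul hLcont).add (hFc.sub continuousOn_const)
  have hXae : X =ᶠ[ae (volume.restrict (Set.Ioo τ 1))] φ := by
    rw [Filter.EventuallyEq, ae_restrict_iff' measurableSet_Ioo]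
    refine Filter.Eventually.of_forall fun u hu => ?_
    rw [hXeq u hu, hφ_def]
    simp only []
    rw [hFdiff u hu]
  have hXaesm : AEStronglyMeasurable X (volume.restrict (Set.Ioo τ 1)) :=
    (hφcont.aestronglyMeasurable measurableSet_Ioo).congr hXae.symm
  have hXabs : ∀ u ∈ Set.Ioo τ 1, |X u| ≤ (ξ + ε) * L u := by
    intro u hu
    have h := hXbd u hu
    have hL := hLnn u hu
    calc |X u| = |(X u - ξ * L u) + ξ * L u| := by ring_nf
      _ ≤ |X u - ξ * L u| + |ξ * L u| := abs_add_le _ _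
      _ ≤ ε * L u + ξ * L u := by
          refine add_le_add h ?_
          rw [abs_of_nonneg (mul_nonneg hξ.le hL)]
      _ = (ξ + ε) * L u := by ring
  have hXint : IntegrableOn X (Set.Ioo τ 1) volume := by
    apply Integrable.mono' (hLint.const_mul (ξ + ε)) hXaesm
    rw [ae_restrict_iff' measurableSet_Ioo]
    exact Filter.Eventually.of_forall fun u hu => by
      rw [Real.norm_eq_abs]; exact hXabs u hu
  have hlow : ∀ u ∈ Set.Ioo τ 1, (ξ - ε) * L u ≤ X u := by
    intro u hu
    have h := (abs_le.1 (hXbd u hu)).1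
    nlinarith [hLnn u hu]
  have hhigh : ∀ u ∈ Set.Ioo τ 1, X u ≤ (ξ + ε) * L u := by
    intro u hu
    have h := (abs_le.1 (hXbd u hu)).2
    nlinarith [hLnn u hu]
  have hIlow : (ξ - ε) * s ≤ ∫ u in Set.Ioo τ 1, X u := by
    have := MeasureTheory.setIntegral_mono_on (hLint.const_mul (ξ - ε)) hXint
      measurableSet_Ioo hlow
    calc (ξ - ε) * s = ∫ u in Set.Ioo τ 1, (ξ - ε) * L u := by
          rw [MeasureTheory.integral_const_mul, hLval]
      _ ≤ ∫ u in Set.Ioo τ 1, X u := this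
  have hIhigh : (∫ u in Set.Ioo τ 1, X u) ≤ (ξ + ε) * s := by
    have := MeasureTheory.setIntegral_mono_on hXint (hLint.const_mul (ξ + ε))
      measurableSet_Ioo hhigh
    calc (∫ u in Set.Ioo τ 1, X u) ≤ ∫ u in Set.Ioo τ 1, (ξ + ε) * L u := this
      _ = (ξ + ε) * s := by rw [MeasureTheory.integral_const_mul, hLval]
  have hconv : (∫ u in τ..1, Real.log (Q u / Q τ)) = ∫ u in Set.Ioo τ 1, X u := by
    rw [intervalIntegral.integral_of_le hτle1,
      MeasureTheory.integral_Ioc_eq_integral_Ioo]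
  -- second moment pieces
  have hsq_low : ∀ u ∈ Set.Ioo τ 1, (ξ - ε)^2 * L u ^ 2 ≤ X u ^ 2 := by
    intro u hu
    have h0 : 0 ≤ (ξ - ε) * L u := mul_nonneg (by linarith) (hLnn u hu)
    have h := pow_le_pow_left₀ h0 (hlow u hu) 2
    rw [mul_pow] at h
    exact h
  have hsq_high : ∀ u ∈ Set.Ioo τ 1, X u ^ 2 ≤ (ξ + ε)^2 * L u ^ 2 := by
    intro u hu
    have h := pow_le_pow_left₀ (abs_nonneg (X u)) (hXabs u hu) 2
    rw [mul_pow, sq_abs] at h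
    exact h
  have hX2ae : (fun u => X u ^ 2) =ᶠ[ae (volume.restrict (Set.Ioo τ 1))]
      (fun u => φ u ^ 2) := hXae.mono fun x hx => by simp only [hx]
  have hX2aesm : AEStronglyMeasurable (fun u => X u ^ 2)
      (volume.restrict (Set.Ioo τ 1)) := hXaesm.pow 2
  have hX2int : IntegrableOn (fun u => X u ^ 2) (Set.Ioo τ 1) volume := by
    apply Integrable.mono' (hL2int.const_mul ((ξ + ε)^2)) hX2aesm
    rw [ae_restrict_iff' measurableSet_Ioo]
    refine Filter.Eventually.of_forall fun u hu => ?_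
    rw [Real.norm_eq_abs, abs_of_nonneg (sq_nonneg _)]
    exact hsq_high u hu
  have hI2low : 2 * (ξ - ε)^2 * s ≤ ∫ u in Set.Ioo τ 1, X u ^ 2 := by
    have := MeasureTheory.setIntegral_mono_on (hL2int.const_mul ((ξ - ε)^2)) hX2int
      measurableSet_Ioo hsq_low
    calc 2 * (ξ - ε)^2 * s = (ξ - ε)^2 * (2 * s) := by ring
      _ = ∫ u in Set.Ioo τ 1, (ξ - ε)^2 * L u ^ 2 := by
          rw [MeasureTheory.integral_const_mul, hL2val]
      _ ≤ _ := this
  have hI2high : (∫ u in Set.Ioo τ 1, X u ^ 2) ≤ 2 * (ξ + ε)^2 * s := by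
    have := MeasureTheory.setIntegral_mono_on hX2int (hL2int.const_mul ((ξ + ε)^2))
      measurableSet_Ioo hsq_high
    calc (∫ u in Set.Ioo τ 1, X u ^ 2) ≤ ∫ u in Set.Ioo τ 1, (ξ + ε)^2 * L u ^ 2 := this
      _ = (ξ + ε)^2 * (2 * s) := by rw [MeasureTheory.integral_const_mul, hL2val]
      _ = 2 * (ξ + ε)^2 * s := by ring
  have hconv2 : (∫ u in τ..1, (Real.log (Q u / Q τ))^2) = ∫ u in Set.Ioo τ 1, X u ^ 2 := by
    rw [intervalIntegral.integral_of_le hτle1,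
      MeasureTheory.integral_Ioc_eq_integral_Ioo]
  have hsinv : (1 - τ)⁻¹ = s⁻¹ := by rw [hs_def]
  have hss : s⁻¹ * s = 1 := inv_mul_cancel₀ hs.ne'
  have hsinvnn : (0:ℝ) ≤ s⁻¹ := inv_nonneg.2 hs.le
  refine ⟨?_, ?_, ?_⟩
  · rw [hconv, hsinv, abs_le]
    constructor
    · have h' := mul_le_mul_of_nonneg_left hIlow hsinvnn
      rw [show s⁻¹ * ((ξ - ε) * s) = (ξ - ε) * (s⁻¹ * s) by ring, hss, mul_one] at h'
      linarith
    · have h' := mul_le_mul_of_nonneg_left hIhigh hsinvnn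
      rw [show s⁻¹ * ((ξ + ε) * s) = (ξ + ε) * (s⁻¹ * s) by ring, hss, mul_one] at h'
      linarith
  · rw [hconv2, hsinv]
    have h' := mul_le_mul_of_nonneg_left hI2low hsinvnn
    rw [show s⁻¹ * (2 * (ξ - ε) ^ 2 * s) = 2 * (ξ - ε) ^ 2 * (s⁻¹ * s) by ring,
      hss, mul_one] at h'
    linarith
  · rw [hconv2, hsinv]
    have h' := mul_le_mul_of_nonneg_left hI2high hsinvnn
    rw [show s⁻¹ * (2 * (ξ + ε) ^ 2 * s) = 2 * (ξ + ε) ^ 2 * (s⁻¹ * s) by ring,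
      hss, mul_one] at h'
    linarith

end HillAux

/-- Population first and second moments of the Hill-type statistic for a
heavy-tailed Karamata quantile function with extreme value index `ξ > 0`:
as `τ → 1⁻`, `(1−τ)⁻¹ ∫_τ^1 log(Q(u)/Q(τ)) du → ξ` and
`(1−τ)⁻¹ ∫_τ^1 (log(Q(u)/Q(τ)))² du → 2ξ²`. -/
theorem hill_population_limits
    (ξ c : ℝ) (hξ : 0 < ξ) (hc : 0 < c)
    (α : ℝ → ℝ) (hmeas : Measurable α)
    (hint : ∀ a b : ℝ, 1 ≤ a → IntervalIntegrable α volume a b)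
    (hα : Filter.Tendsto α Filter.atTop (nhds 0))
    (Q : ℝ → ℝ)
    (hQ : ∀ u ∈ Set.Ioo (0:ℝ) 1,
      Q u = (1 - u) ^ (-ξ) * c *
        Real.exp (∫ t in (1:ℝ)..(1 / (1 - u)), α t / t)) :
    Filter.Tendsto
      (fun τ => (1 - τ)⁻¹ * ∫ u in τ..1, Real.log (Q u / Q τ))
      (nhdsWithin 1 (Set.Iio 1)) (nhds ξ) ∧
    Filter.Tendsto
      (fun τ => (1 - τ)⁻¹ * ∫ u in τ..1, (Real.log (Q u / Q τ)) ^ 2)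
      (nhdsWithin 1 (Set.Iio 1)) (nhds (2 * ξ ^ 2)) := by
  have main : ∀ ε : ℝ, 0 < ε → ε ≤ ξ → ∀ᶠ τ in nhdsWithin 1 (Set.Iio 1),
      |(1-τ)⁻¹ * (∫ u in τ..1, Real.log (Q u / Q τ)) - ξ| ≤ ε ∧
      2*(ξ-ε)^2 ≤ (1-τ)⁻¹ * ∫ u in τ..1, (Real.log (Q u / Q τ))^2 ∧
      (1-τ)⁻¹ * (∫ u in τ..1, (Real.log (Q u / Q τ))^2) ≤ 2*(ξ+ε)^2 := by
    intro ε hε hεξ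
    obtain ⟨T₀, hT₀⟩ := eventually_atTop.1 (Metric.tendsto_nhds.1 hα ε hε)
    set T := max T₀ 1 with hT_def
    have hT1 : (1:ℝ) ≤ T := le_max_right _ _
    have hTpos : (0:ℝ) < T := lt_of_lt_of_le one_pos hT1
    have hαT : ∀ t, T ≤ t → |α t| ≤ ε := by
      intro t ht
      have := hT₀ t (le_trans (le_max_left _ _) ht)
      rw [Real.dist_eq, sub_zero] at this
      exact this.le
    set m := max (1 - 1/T) (1/2 : ℝ) with hm_def
    have hm1 : m < 1 := by
      apply max_lt
      · have : 0 < 1/T := by positivity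
        linarith
      · norm_num
    have hmem : Set.Ioo m 1 ∈ nhdsWithin 1 (Set.Iio 1) :=
      Ioo_mem_nhdsLT_of_mem ⟨hm1, le_rfl⟩
    filter_upwards [hmem] with τ hτ
    have hτ0 : 0 < τ := lt_of_lt_of_le (by norm_num) (le_trans (le_max_right _ _) hτ.1.le)
    have hτ1 : τ < 1 := hτ.2
    have h1τ : 0 < 1 - τ := by linarith
    have hτm : 1 - 1/T < τ := lt_of_le_of_lt (le_max_left _ _) hτ.1
    have hτT : T ≤ 1/(1-τ) := by
      rw [le_div_iff₀ h1τ]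
      have h2 : 1 - τ < 1/T := by linarith
      calc T * (1 - τ) ≤ T * (1/T) := by
            apply mul_le_mul_of_nonneg_left h2.le hTpos.le
        _ = 1 := mul_one_div_cancel (ne_of_gt hTpos)
    exact key_bounds ξ c hξ hc α hmeas hint Q hQ ε T τ hε hεξ hT1 hαT ⟨hτ0, hτ1⟩ hτT
  constructor
  · refine Metric.tendsto_nhds.2 fun ε0 hε0 => ?_
    have hε : 0 < min (ε0/2) ξ := lt_min (by linarith) hξ
    filter_upwards [main (min (ε0/2) ξ) hε (min_le_right _ _)] with τ hτ
    rw [Real.dist_eq]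
    exact lt_of_le_of_lt hτ.1 (lt_of_le_of_lt (min_le_left _ _) (by linarith))
  · refine Metric.tendsto_nhds.2 fun ε0 hε0 => ?_
    set ε := min (ε0/(6*ξ+1)) ξ with hε_def
    have hε : 0 < ε := lt_min (by positivity) hξ
    have hεξ : ε ≤ ξ := min_le_right _ _
    have hε1 : ε ≤ ε0/(6*ξ+1) := min_le_left _ _
    filter_upwards [main ε hε hεξ] with τ hτ
    obtain ⟨-, h2, h3⟩ := hτ
    rw [Real.dist_eq, abs_lt]
    have hb : 6 * ξ * ε < ε0 := by
      have h6 : (0:ℝ) < 6*ξ+1 := by linarith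
      have := mul_le_mul_of_nonneg_left hε1 (le_of_lt (by positivity : (0:ℝ) < 6*ξ))
      have hlt : 6*ξ * (ε0/(6*ξ+1)) < ε0 := by
        rw [← mul_div_assoc, div_lt_iff₀ h6]
        nlinarith
      nlinarith
    constructor <;> nlinarith
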